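/- Let g ∈ L¹(ℝ) be even with bounded derivatives up to order 3 on [−1,1]. Define θ_g on the strip S_{(−2,2)} = {x+iy : |y| < 2} by θ_g(z) = (1/2π) η_g(e^{iz(·)}), where η_g(φ) = ∫_0^∞ [g(k)/(k(cosh(2k)−1))](φ(k) − φ(−k) − 2φ'(0)k) dk. Then θ_g is holomorphic on S_{(−2,2)}. -/

import Mathlib

open MeasureTheory Complex

/-- `θ_g(z) = (1/2π) η_g(e^{iz(·)})
  = (1/2π) ∫_0^∞ g(k)/(k(cosh 2k − 1)) (e^{izk} − e^{-izk} − 2izk) dk`. -/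
noncomputable def theta (g : ℝ → ℝ) (z : ℂ) : ℂ :=
  (1 / (2 * Real.pi)) *
    ∫ k in Set.Ioi (0 : ℝ),
      ((g k / (k * (Real.cosh (2 * k) - 1)) : ℝ) : ℂ) *
        (Complex.exp (Complex.I * z * k) - Complex.exp (-(Complex.I * z * k)) -
          2 * Complex.I * z * k)

noncomputable def thF (g : ℝ → ℝ) (z : ℂ) (k : ℝ) : ℂ :=
  ((g k / (k * (Real.cosh (2 * k) - 1)) : ℝ) : ℂ) *
    (Complex.exp (Complex.I * z * k) - Complex.exp (-(Complex.I * z * k)) -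
      2 * Complex.I * z * k)

noncomputable def thF' (g : ℝ → ℝ) (z : ℂ) (k : ℝ) : ℂ :=
  ((g k / (k * (Real.cosh (2 * k) - 1)) : ℝ) : ℂ) *
    (Complex.I * (k : ℂ) *
      (Complex.exp (Complex.I * z * k) + Complex.exp (-(Complex.I * z * k)) - 2))

lemma taylor2 (w : ℂ) (hw : ‖w‖ ≤ 1) :
    ‖Complex.exp w - (1 + w + w^2/2)‖ ≤ ‖w‖ ^ 3 := by
  have h := Complex.exp_bound hw (n := 3) (by norm_num)
  have hs : (∑ m ∈ Finset.range 3, w ^ m / m.factorial) = 1 + w + w^2/2 := by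
    simp [Finset.sum_range_succ]
  rw [hs] at h
  refine h.trans ?_
  have h0 : (0:ℝ) ≤ ‖w‖ ^ 3 := by positivity
  have h4 : (((3:ℕ).succ : ℝ) * (((3:ℕ).factorial : ℝ) * 3)⁻¹ : ℝ) ≤ 1 := by
    norm_num [Nat.factorial]
  nlinarith

lemma sinh_est (w : ℂ) (hw : ‖w‖ ≤ 1) :
    ‖Complex.exp w - Complex.exp (-w) - 2*w‖ ≤ 2 * ‖w‖ ^ 3 := by
  have h1 := taylor2 w hw
  have h2 := taylor2 (-w) (by simpa using hw)
  have key : Complex.exp w - Complex.exp (-w) - 2*w =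
      (Complex.exp w - (1 + w + w^2/2)) - (Complex.exp (-w) - (1 + -w + (-w)^2/2)) := by ring
  rw [key]
  calc ‖_‖ ≤ _ + _ := norm_sub_le _ _
  _ ≤ ‖w‖ ^3 + ‖-w‖ ^3 := by gcongr
  _ = 2 * ‖w‖ ^ 3 := by simp; ring

lemma cosh_est (w : ℂ) (hw : ‖w‖ ≤ 1) :
    ‖Complex.exp w + Complex.exp (-w) - 2‖ ≤ 3 * ‖w‖ ^ 2 := by
  have h1 := taylor2 w hw
  have h2 := taylor2 (-w) (by simpa using hw)
  have key : Complex.exp w + Complex.exp (-w) - 2 =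
      (Complex.exp w - (1 + w + w^2/2)) + (Complex.exp (-w) - (1 + -w + (-w)^2/2)) + w^2 := by ring
  rw [key]
  calc ‖_‖ ≤ ‖(Complex.exp w - (1 + w + w^2/2)) + (Complex.exp (-w) - (1 + -w + (-w)^2/2))‖ + ‖w^2‖ := norm_add_le _ _
  _ ≤ (‖w‖ ^3 + ‖-w‖ ^3) + ‖w‖^2 := by
      gcongr
      · exact (norm_add_le _ _).trans (by gcongr)
      · simp [map_pow]
  _ ≤ _ := by
      simp only [norm_neg]
      nlinarith [norm_nonneg w, pow_le_pow_of_le_one (norm_nonneg w) hw (by norm_num : (2:ℕ) ≤ 3)]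

lemma coshlb1 (k : ℝ) (hk : 0 ≤ k) : 2*k^2 ≤ Real.cosh (2*k) - 1 := by
  have h1 : Real.cosh (2*k) = Real.cosh k ^2 + Real.sinh k ^2 := Real.cosh_two_mul k
  have h2 : Real.cosh k ^2 = Real.sinh k ^2 + 1 := Real.cosh_sq k
  have h3 : k ≤ Real.sinh k := Real.self_le_sinh_iff.2 hk
  nlinarith

lemma coshlb2 (δ k : ℝ) (hδ : 0 < δ) (hk : δ ≤ k) :
    ((1 - Real.exp (-δ)) * Real.exp k)^2 / 2 ≤ Real.cosh (2*k) - 1 := by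
  have h1 : Real.cosh (2*k) = Real.cosh k ^2 + Real.sinh k ^2 := Real.cosh_two_mul k
  have h2 : Real.cosh k ^2 = Real.sinh k ^2 + 1 := Real.cosh_sq k
  have hsinh : Real.sinh k = (Real.exp k - Real.exp (-k))/2 := Real.sinh_eq k
  have hek : (1:ℝ) ≤ Real.exp (k - δ) := Real.one_le_exp (by linarith)
  have h4 : (1 - Real.exp (-δ)) * Real.exp k ≤ Real.exp k - 1 := by
    have : Real.exp (-δ) * Real.exp k = Real.exp (k - δ) := by
      rw [← Real.exp_add]; ring_nf
    nlinarith [Real.exp_pos k]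
  have h5 : Real.exp k - 1 ≤ 2 * Real.sinh k := by
    have : Real.exp (-k) ≤ 1 := Real.exp_le_one_iff.2 (by linarith)
    rw [hsinh]; linarith
  have h6 : 0 ≤ (1 - Real.exp (-δ)) * Real.exp k := by
    have h7 : Real.exp (-δ) ≤ 1 := Real.exp_le_one_iff.2 (by linarith)
    exact mul_nonneg (by linarith) (Real.exp_pos k).le
  nlinarith

set_option maxHeartbeats 2000000 in
lemma thF_bound (g : ℝ → ℝ) (M : ℝ) (hM : 1 ≤ M) (z : ℂ) (hz : ‖z‖ ≤ M)
    (hzim : |z.im| ≤ 2) (k : ℝ) (hk : 0 < k) :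
    ‖thF g z k‖ ≤ (M^3 + 2*M^2 + (4*M+4*M^2)/(1-Real.exp (-M⁻¹))^2
        + 8/(1-Real.exp (-M⁻¹))^2) * |g k| ∧
    ‖thF' g z k‖ ≤ (M^3 + 2*M^2 + (4*M+4*M^2)/(1-Real.exp (-M⁻¹))^2
        + 8/(1-Real.exp (-M⁻¹))^2) * |g k| := by
  have hM0 : (0:ℝ) < M := lt_of_lt_of_le one_pos hM
  set c : ℝ := 1 - Real.exp (-M⁻¹) with hc_def
  have hc : 0 < c := by
    have : Real.exp (-M⁻¹) < 1 := Real.exp_lt_one_iff.2 (by linarith [inv_pos.2 hM0])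
    simp only [hc_def]; linarith
  set C : ℝ := M^3 + 2*M^2 + (4*M+4*M^2)/c^2 + 8/c^2 with hC_def
  have hpos1 : 0 ≤ (4*M+4*M^2)/c^2 := by positivity
  have hpos2 : 0 ≤ (8:ℝ)/c^2 := by positivity
  set D : ℝ := k * (Real.cosh (2*k) - 1) with hD_def
  have hcosh1 : 2*k^2 ≤ Real.cosh (2*k) - 1 := coshlb1 k hk.le
  have hcoshpos : 0 < Real.cosh (2*k) - 1 := by nlinarith
  have hD : 0 < D := by rw [hD_def]; exact mul_pos hk hcoshpos
  set w : ℂ := Complex.I * z * (k:ℂ) with hw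
  clear_value c C D w
  have habsw : ‖w‖ = ‖z‖ * k := by
    rw [hw, norm_mul, norm_mul, Complex.norm_I, one_mul, Complex.norm_real, Real.norm_eq_abs, abs_of_pos hk]
  have hwMk : ‖w‖ ≤ M * k := by
    rw [habsw]; exact mul_le_mul_of_nonneg_right hz hk.le
  have h2w : (2:ℂ) * Complex.I * z * (k:ℂ) = 2 * w := by rw [hw]; ring
  have hre : w.re = -z.im * k := by
    rw [hw]
    simp [Complex.mul_re, Complex.mul_im]
  have habs_exp : ‖Complex.exp w‖ = Real.exp (-z.im * k) := by
    rw [Complex.norm_exp, hre]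
  have habs_exp' : ‖Complex.exp (-w)‖ = Real.exp (z.im * k) := by
    rw [Complex.norm_exp]; simp [hre]
  have h2k : Real.exp (2*k) = Real.exp k ^ 2 := by rw [two_mul, Real.exp_add, sq]
  have hzim1 : -z.im ≤ 2 := by have := neg_abs_le z.im; linarith
  have hzim2 : z.im ≤ 2 := by have := le_abs_self z.im; linarith
  have hE1 : ‖Complex.exp w‖ ≤ Real.exp k ^ 2 := by
    rw [habs_exp, ← h2k]
    exact Real.exp_le_exp.2 (mul_le_mul_of_nonneg_right hzim1 hk.le)
  have hE2 : ‖Complex.exp (-w)‖ ≤ Real.exp k ^ 2 := by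
    rw [habs_exp', ← h2k]
    exact Real.exp_le_exp.2 (mul_le_mul_of_nonneg_right hzim2 hk.le)
  have hEk : k ≤ Real.exp k ^ 2 := by
    have h1 := Real.add_one_le_exp k
    have h2 : 1 ≤ Real.exp k := Real.one_le_exp hk.le
    nlinarith
  have hE1' : (1:ℝ) ≤ Real.exp k ^ 2 := by
    have h2 : 1 ≤ Real.exp k := Real.one_le_exp hk.le
    nlinarith
  -- norms as ratios
  have hnormF : ‖thF g z k‖ =
      |g k| * (‖Complex.exp w - Complex.exp (-w) - 2*w‖ / D) := by
    simp only [thF]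
    rw [norm_mul, Complex.norm_real, Real.norm_eq_abs, ← hD_def, abs_div,
      abs_of_pos hD, ← hw, h2w]
    ring
  have hnormF' : ‖thF' g z k‖ =
      |g k| * (k * ‖Complex.exp w + Complex.exp (-w) - 2‖ / D) := by
    simp only [thF']
    rw [norm_mul, Complex.norm_real, Real.norm_eq_abs, ← hD_def, abs_div,
      abs_of_pos hD, ← hw, norm_mul, norm_mul, Complex.norm_I,
      one_mul, Complex.norm_real, Real.norm_eq_abs, abs_of_pos hk]
    ring
  constructor
  · rw [hnormF, mul_comm]
    refine mul_le_mul_of_nonneg_right ?_ (abs_nonneg _)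
    rcases le_or_gt k M⁻¹ with hsmall | hlarge
    · have hw2 : ‖w‖ ≤ 1 := by
        calc ‖w‖ ≤ M * k := hwMk
        _ ≤ M * M⁻¹ := mul_le_mul_of_nonneg_left hsmall hM0.le
        _ = 1 := mul_inv_cancel₀ hM0.ne'
      have hN : ‖Complex.exp w - Complex.exp (-w) - 2*w‖ ≤ 2*(M*k)^3 := by
        refine (sinh_est w hw2).trans ?_
        have := pow_le_pow_left₀ (norm_nonneg w) hwMk 3
        linarith
      have hDl : 2*k^3 ≤ D := by nlinarith
      have hratio : ‖Complex.exp w - Complex.exp (-w) - 2*w‖ / D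
          ≤ 2*(M*k)^3 / (2*k^3) := by
        apply div_le_div₀ (by positivity) hN (by positivity) hDl
      have heq : 2*(M*k)^3 / (2*k^3) = M^3 := by field_simp
      rw [heq] at hratio
      have : 0 ≤ 2*M^2 := by positivity
      rw [hC_def]; linarith
    · have hN : ‖Complex.exp w - Complex.exp (-w) - 2*w‖
          ≤ (2+2*M) * Real.exp k ^ 2 := by
        have habs2w : ‖2*w‖ ≤ 2*(M*k) := by
          rw [norm_mul, Complex.norm_two]; linarith
        calc ‖Complex.exp w - Complex.exp (-w) - 2*w‖
            ≤ ‖Complex.exp w - Complex.exp (-w)‖ + ‖2*w‖ :=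
              norm_sub_le _ _
        _ ≤ (‖Complex.exp w‖ + ‖Complex.exp (-w)‖) + 2*(M*k) := by
              have := norm_sub_le (Complex.exp w) (Complex.exp (-w))
              linarith
        _ ≤ (2+2*M) * Real.exp k ^ 2 := by nlinarith
      have hDl : M⁻¹ * ((c * Real.exp k)^2/2) ≤ D := by
        have h1 := coshlb2 M⁻¹ k (by positivity) hlarge.le
        rw [← hc_def] at h1
        have h2 : (0:ℝ) ≤ (c * Real.exp k)^2/2 := by positivity
        rw [hD_def]
        exact mul_le_mul hlarge.le h1 h2 hk.le
      have hratio : ‖Complex.exp w - Complex.exp (-w) - 2*w‖ / D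
          ≤ ((2+2*M) * Real.exp k ^ 2) / (M⁻¹ * ((c * Real.exp k)^2/2)) := by
        apply div_le_div₀ (by positivity) hN (by positivity) hDl
      have heq : ((2+2*M) * Real.exp k ^ 2) / (M⁻¹ * ((c * Real.exp k)^2/2))
          = (4*M+4*M^2)/c^2 := by
        field_simp
        ring
      rw [heq] at hratio
      have h3 : 0 ≤ M^3 := by positivity
      have h4 : 0 ≤ 2*M^2 := by positivity
      rw [hC_def]; linarith
  · rw [hnormF', mul_comm]
    refine mul_le_mul_of_nonneg_right ?_ (abs_nonneg _)
    rcases le_or_gt k M⁻¹ with hsmall | hlarge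
    · have hw2 : ‖w‖ ≤ 1 := by
        calc ‖w‖ ≤ M * k := hwMk
        _ ≤ M * M⁻¹ := mul_le_mul_of_nonneg_left hsmall hM0.le
        _ = 1 := mul_inv_cancel₀ hM0.ne'
      have hN : ‖Complex.exp w + Complex.exp (-w) - 2‖ ≤ 3*(M*k)^2 := by
        refine (cosh_est w hw2).trans ?_
        have := pow_le_pow_left₀ (norm_nonneg w) hwMk 2
        linarith
      have hDl : 2*k^3 ≤ D := by nlinarith
      have hratio : k * ‖Complex.exp w + Complex.exp (-w) - 2‖ / D
          ≤ (k * (3*(M*k)^2)) / (2*k^3) := by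
        apply div_le_div₀ (by positivity) ?_ (by positivity) hDl
        exact mul_le_mul_of_nonneg_left hN hk.le
      have heq : (k * (3*(M*k)^2)) / (2*k^3) = 3/2*M^2 := by field_simp
      rw [heq] at hratio
      have h3 : 0 ≤ M^3 := by positivity
      have h4 : 0 ≤ M^2 := by positivity
      rw [hC_def]; linarith
    · have hN : ‖Complex.exp w + Complex.exp (-w) - 2‖
          ≤ 4 * Real.exp k ^ 2 := by
        calc ‖Complex.exp w + Complex.exp (-w) - 2‖
            ≤ ‖Complex.exp w + Complex.exp (-w)‖ + ‖2‖ :=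
              norm_sub_le _ _
        _ ≤ (‖Complex.exp w‖ + ‖Complex.exp (-w)‖) + 2 := by
              have := norm_add_le (Complex.exp w) (Complex.exp (-w))
              simp only [Complex.norm_two]
              linarith
        _ ≤ 4 * Real.exp k ^ 2 := by nlinarith
      have hDl : k * ((c * Real.exp k)^2/2) ≤ D := by
        have h1 := coshlb2 M⁻¹ k (by positivity) hlarge.le
        rw [← hc_def] at h1
        rw [hD_def]
        exact mul_le_mul_of_nonneg_left h1 hk.le
      have hratio : k * ‖Complex.exp w + Complex.exp (-w) - 2‖ / D
          ≤ (k * (4 * Real.exp k ^ 2)) / (k * ((c * Real.exp k)^2/2)) := by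
        apply div_le_div₀ (by positivity) ?_ (by positivity) hDl
        exact mul_le_mul_of_nonneg_left hN hk.le
      have heq : (k * (4 * Real.exp k ^ 2)) / (k * ((c * Real.exp k)^2/2)) = 8/c^2 := by
        field_simp
        ring
      rw [heq] at hratio
      have h3 : 0 ≤ M^3 := by positivity
      have h4 : 0 ≤ 2*M^2 := by positivity
      rw [hC_def]; linarith

lemma thF_hasDerivAt (g : ℝ → ℝ) (k : ℝ) (z : ℂ) :
    HasDerivAt (fun z => thF g z k) (thF' g z k) z := by
  have h1 : HasDerivAt (fun z : ℂ => Complex.I * z * (k:ℂ)) (Complex.I * k) z := by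
    simpa using ((hasDerivAt_id z).const_mul Complex.I).mul_const (k:ℂ)
  have h2 := h1.cexp
  have h3 := h1.neg.cexp
  have h4 : HasDerivAt (fun z : ℂ => 2 * Complex.I * z * (k:ℂ)) (2 * Complex.I * k) z := by
    simpa [mul_assoc] using ((hasDerivAt_id z).const_mul (2 * Complex.I)).mul_const (k:ℂ)
  have h5 := HasDerivAt.const_mul ((g k / (k * (Real.cosh (2*k) - 1)) : ℝ) : ℂ)
    ((h2.sub h3).sub h4)
  have heq : thF' g z k =
      ((g k / (k * (Real.cosh (2*k) - 1)) : ℝ) : ℂ) *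
        ((Complex.exp (Complex.I * z * k) * (Complex.I * k) -
          Complex.exp (-(Complex.I * z * k)) * -(Complex.I * k)) - 2 * Complex.I * k) := by
    simp only [thF']
    ring
  rw [heq]
  exact h5

lemma thF_aemeas (g : ℝ → ℝ) (hg : Integrable g) (z : ℂ) :
    AEStronglyMeasurable (fun k => thF g z k) (volume.restrict (Set.Ioi (0:ℝ))) := by
  apply AEStronglyMeasurable.mul
  · apply Continuous.comp_aestronglyMeasurable Complex.continuous_ofReal
    have hden : Measurable fun k : ℝ => k * (Real.cosh (2*k) - 1) :=
      (continuous_id.mul ((Real.continuous_cosh.comp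
        (continuous_const.mul continuous_id)).sub continuous_const)).measurable
    exact (hg.aestronglyMeasurable.restrict.aemeasurable.div
      hden.aemeasurable).aestronglyMeasurable
  · apply Continuous.aestronglyMeasurable
    have hc : Continuous fun k : ℝ => Complex.I * z * (k:ℂ) :=
      continuous_const.mul Complex.continuous_ofReal
    exact ((Complex.continuous_exp.comp hc).sub
      (Complex.continuous_exp.comp hc.neg)).sub (continuous_const.mul Complex.continuous_ofReal)

lemma thF'_aemeas (g : ℝ → ℝ) (hg : Integrable g) (z : ℂ) :
    AEStronglyMeasurable (fun k => thF' g z k) (volume.restrict (Set.Ioi (0:ℝ))) := by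
  apply AEStronglyMeasurable.mul
  · apply Continuous.comp_aestronglyMeasurable Complex.continuous_ofReal
    have hden : Measurable fun k : ℝ => k * (Real.cosh (2*k) - 1) :=
      (continuous_id.mul ((Real.continuous_cosh.comp
        (continuous_const.mul continuous_id)).sub continuous_const)).measurable
    exact (hg.aestronglyMeasurable.restrict.aemeasurable.div
      hden.aemeasurable).aestronglyMeasurable
  · apply Continuous.aestronglyMeasurable
    have hc : Continuous fun k : ℝ => Complex.I * z * (k:ℂ) :=
      continuous_const.mul Complex.continuous_ofReal
    exact (continuous_const.mul Complex.continuous_ofReal).mul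
      (((Complex.continuous_exp.comp hc).add (Complex.continuous_exp.comp hc.neg)).sub
        continuous_const)

theorem theta_holomorphic' (g : ℝ → ℝ) (hg : Integrable g) :
    DifferentiableOn ℂ (theta g) {z : ℂ | |z.im| < 2} := by
  have key : ∀ z₀ ∈ {z : ℂ | |z.im| < 2}, DifferentiableAt ℂ (theta g) z₀ := by
    intro z₀ hz₀
    simp only [Set.mem_setOf_eq] at hz₀
    set ε : ℝ := (2 - |z₀.im|)/2 with hε_def
    have hε : 0 < ε := by rw [hε_def]; linarith
    set M : ℝ := max 1 (‖z₀‖ + ε) with hM_def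
    have hM1 : (1:ℝ) ≤ M := le_max_left _ _
    set C : ℝ := M^3 + 2*M^2 + (4*M+4*M^2)/(1-Real.exp (-M⁻¹))^2
        + 8/(1-Real.exp (-M⁻¹))^2 with hC_def
    have hM2 : ‖z₀‖ + ε ≤ M := le_max_right _ _
    clear_value M
    clear_value C
    have hball : ∀ z ∈ Metric.ball z₀ ε, ‖z‖ ≤ M ∧ |z.im| ≤ 2 := by
      intro z hz
      rw [Metric.mem_ball, Complex.dist_eq] at hz
      constructor
      · have h1 : ‖z‖ ≤ ‖z₀‖ + ‖z - z₀‖ := by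
          simpa using norm_add_le z₀ (z - z₀)
        linarith
      · have h1 : |z.im - z₀.im| ≤ ‖z - z₀‖ := by
          simpa using Complex.abs_im_le_norm (z - z₀)
        have h2 : |z.im| ≤ |z₀.im| + |z.im - z₀.im| := by
          have := abs_sub_abs_le_abs_sub z.im z₀.im
          have := abs_add_le z₀.im (z.im - z₀.im)
          calc |z.im| = |z₀.im + (z.im - z₀.im)| := by ring_nf
          _ ≤ |z₀.im| + |z.im - z₀.im| := abs_add_le _ _
        rw [hε_def] at *
        linarith
    have hbound_int : Integrable (fun k => C * |g k|) (volume.restrict (Set.Ioi (0:ℝ))) :=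
      (hg.abs.restrict).const_mul C
    have h_bound : ∀ᵐ k ∂(volume.restrict (Set.Ioi (0:ℝ))),
        ∀ z ∈ Metric.ball z₀ ε, ‖thF' g z k‖ ≤ C * |g k| := by
      filter_upwards [ae_restrict_mem measurableSet_Ioi] with k hk z hz
      obtain ⟨h1, h2⟩ := hball z hz
      rw [hC_def]
      exact (thF_bound g M hM1 z h1 h2 k hk).2
    have hF_int : Integrable (fun k => thF g z₀ k) (volume.restrict (Set.Ioi (0:ℝ))) := by
      apply Integrable.mono' hbound_int (thF_aemeas g hg z₀)
      filter_upwards [ae_restrict_mem measurableSet_Ioi] with k hk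
      obtain ⟨h1, h2⟩ := hball z₀ (Metric.mem_ball_self hε)
      rw [hC_def]
      exact (thF_bound g M hM1 z₀ h1 h2 k hk).1
    have h_diff : ∀ᵐ k ∂(volume.restrict (Set.Ioi (0:ℝ))),
        ∀ z ∈ Metric.ball z₀ ε, HasDerivAt (fun z => thF g z k) (thF' g z k) z :=
      Filter.Eventually.of_forall fun k z _ => thF_hasDerivAt g k z
    obtain ⟨-, hderiv⟩ := hasDerivAt_integral_of_dominated_loc_of_deriv_le (Metric.ball_mem_nhds z₀ hε)
      (Filter.Eventually.of_forall fun z => thF_aemeas g hg z) hF_int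
      (thF'_aemeas g hg z₀) h_bound hbound_int h_diff
    have hth : theta g = fun z => (1/(2*(Real.pi:ℂ))) * ∫ k in Set.Ioi (0:ℝ), thF g z k := by
      funext z
      simp only [theta, thF]
    rw [hth]
    exact (hderiv.const_mul (1/(2*(Real.pi:ℂ)))).differentiableAt
  exact fun z hz => (key z hz).differentiableWithinAt

theorem theta_holomorphic (g : ℝ → ℝ) (hg : Integrable g)
    (heven : ∀ k, g (-k) = g k)
    (hreg : ContDiffOn ℝ 3 g (Set.Icc (-1 : ℝ) 1))
    (hbdd : ∀ j : ℕ, j ≤ 3 → ∃ C : ℝ, ∀ x ∈ Set.Icc (-1 : ℝ) 1,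
      |iteratedDeriv j g x| ≤ C) :
    DifferentiableOn ℂ (theta g) {z : ℂ | |z.im| < 2} :=
  theta_holomorphic' g hg
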